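/- If a likelihood ordering on quantum events satisfies transitivity, dominance, separation, and equivalence, and the set of measurements is weight-rich, then E|M ≿ F|N implies W_M(E) ≥ W_N(F). -/

import Mathlib

/-- A quantum measurement: a finite outcome set with an additive,
normalized, nonnegative weight function on events (subsets of outcomes). -/
structure Measurement where
  S : Finset ℕ
  W : Finset ℕ → ℝ
  nonneg : ∀ E, 0 ≤ W E
  emptyW : W ∅ = 0
  totalW : W S = 1
  addW : ∀ E F : Finset ℕ, E ⊆ S → F ⊆ S → Disjoint E F → W (E ∪ F) = W E + W F

/-- A likelihood ordering on event–measurement pairs. -/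
abbrev LOrder := (Finset ℕ × Measurement) → (Finset ℕ × Measurement) → Prop

/-- E|M ≃ F|N : both directions of the likelihood ordering hold. -/
def lequiv (R : LOrder) (a b : Finset ℕ × Measurement) : Prop := R a b ∧ R b a

/-- E is null with respect to M. -/
def IsNull (R : LOrder) (E : Finset ℕ) (M : Measurement) : Prop := lequiv R (E, M) (∅, M)

/-- Transitivity axiom. -/
def TransAx (R : LOrder) : Prop := ∀ a b c, R a b → R b c → R a c

/-- Dominance axiom. -/
def DominanceAx (R : LOrder) : Prop :=
  ∀ (M : Measurement) (E F : Finset ℕ), E ⊆ F → F ⊆ M.S →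
    R (F, M) (E, M) ∧ (lequiv R (F, M) (E, M) ↔ IsNull R (F \ E) M)

/-- Separation axiom: some event is not null. -/
def SeparationAx (R : LOrder) : Prop :=
  ∃ (E : Finset ℕ) (M : Measurement), E ⊆ M.S ∧ ¬ IsNull R E M

/-- Equivalence axiom: equal weight implies equal likelihood. -/
def EquivalenceAx (R : LOrder) : Prop :=
  ∀ (M N : Measurement) (E F : Finset ℕ), E ⊆ M.S → F ⊆ N.S →
    M.W E = N.W F → lequiv R (E, M) (F, N)

/-- Weight-richness: every finite list of positive reals summing to 1 is
realized as the singleton-outcome weights of some measurement. -/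
def Rich : Prop :=
  ∀ (n : ℕ) (w : Fin n → ℝ), (∀ i, 0 < w i) → (∑ i, w i) = 1 →
    ∃ (M : Measurement) (e : Fin n ↪ ℕ),
      M.S = Finset.univ.map e ∧ ∀ i, M.W {e i} = w i

/-- `Pr` represents the likelihood ordering `R`. -/
def Represents (R : LOrder) (Pr : Finset ℕ × Measurement → ℝ) : Prop :=
  (∀ M : Measurement, Pr (∅, M) = 0) ∧
  (∀ M : Measurement, Pr (M.S, M) = 1) ∧
  (∀ (M : Measurement) (E F : Finset ℕ), E ⊆ M.S → F ⊆ M.S → Disjoint E F →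
      Pr (E ∪ F, M) = Pr (E, M) + Pr (F, M)) ∧
  (∀ a b : Finset ℕ × Measurement, a.1 ⊆ a.2.S → b.1 ⊆ b.2.S →
      (Pr a ≥ Pr b ↔ R a b))

/-! ### Auxiliary lemmas -/

lemma weight_le_one (M : Measurement) {E : Finset ℕ} (hE : E ⊆ M.S) : M.W E ≤ 1 := by
  have hkey : M.W (E ∪ (M.S \ E)) = M.W E + M.W (M.S \ E) :=
    M.addW E (M.S \ E) hE (Finset.sdiff_subset) Finset.disjoint_sdiff
  rw [Finset.union_sdiff_of_subset hE, M.totalW] at hkey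
  have := M.nonneg (M.S \ E)
  linarith

lemma lequiv_trans (R : LOrder) (hT : TransAx R) {a b c : Finset ℕ × Measurement}
    (h1 : lequiv R a b) (h2 : lequiv R b c) : lequiv R a c :=
  ⟨hT _ _ _ h1.1 h2.1, hT _ _ _ h2.2 h1.2⟩

lemma null_transfer (R : LOrder) (hT : TransAx R) (hE : EquivalenceAx R)
    {P M : Measurement} {D E : Finset ℕ} (hDP : D ⊆ P.S) (hEs : E ⊆ M.S)
    (hw : P.W D = M.W E) (hnull : IsNull R D P) : IsNull R E M := by
  have h1 : lequiv R (E, M) (D, P) := hE M P E D hEs hDP hw.symm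
  have h2 : lequiv R (∅, P) (∅, M) :=
    hE P M ∅ ∅ (Finset.empty_subset _) (Finset.empty_subset _) (by rw [P.emptyW, M.emptyW])
  exact lequiv_trans R hT (lequiv_trans R hT h1 hnull) h2

lemma null_subset (R : LOrder) (hT : TransAx R) (hD : DominanceAx R)
    {M : Measurement} {C D : Finset ℕ} (hCD : C ⊆ D) (hDS : D ⊆ M.S)
    (hnull : IsNull R D M) : IsNull R C M := by
  have h1 : R (D, M) (C, M) := (hD M C D hCD hDS).1
  have h2 : R (C, M) (∅, M) := (hD M ∅ C (Finset.empty_subset _) (hCD.trans hDS)).1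
  exact ⟨h2, hT _ _ _ hnull.2 h1⟩

lemma null_union (R : LOrder) (hT : TransAx R) (hD : DominanceAx R)
    {M : Measurement} {C D : Finset ℕ} (hCS : C ⊆ M.S) (hDS : D ⊆ M.S)
    (hdisj : Disjoint C D) (h1 : IsNull R C M) (h2 : IsNull R D M) :
    IsNull R (C ∪ D) M := by
  have hUS : C ∪ D ⊆ M.S := Finset.union_subset hCS hDS
  have hd := hD M C (C ∪ D) Finset.subset_union_left hUS
  have hsd : (C ∪ D) \ C = D := Finset.union_sdiff_cancel_left hdisj
  have heq : lequiv R (C ∪ D, M) (C, M) := (hd.2).mpr (by rw [hsd]; exact h2)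
  exact lequiv_trans R hT heq h1

lemma null_empty (R : LOrder) (hE : EquivalenceAx R) (M : Measurement) :
    IsNull R (∅ : Finset ℕ) M :=
  hE M M ∅ ∅ (Finset.empty_subset _) (Finset.empty_subset _) rfl

/-- Build a measurement realizing any family of nonnegative weights summing to 1,
as weights of pairwise disjoint events. -/
lemma mkMeas (hR : Rich) (n : ℕ) (w : Fin n → ℝ) (h0 : ∀ i, 0 ≤ w i)
    (h1 : ∑ i, w i = 1) :
    ∃ (M : Measurement) (A : Fin n → Finset ℕ),
      (∀ i, A i ⊆ M.S) ∧
      (∀ i j, i ≠ j → Disjoint (A i) (A j)) ∧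
      (∀ T : Finset (Fin n), M.W (T.biUnion A) = ∑ i ∈ T, w i) := by
  classical
  set s : Finset (Fin n) := Finset.univ.filter (fun i => 0 < w i) with hs
  set m : ℕ := s.card with hm
  let φ : Fin m ≃o {x // x ∈ s} := s.orderIsoOfFin rfl
  let w' : Fin m → ℝ := fun j => w (φ j)
  have hw'pos : ∀ j, 0 < w' j := fun j => (Finset.mem_filter.mp (φ j).2).2
  have hw'sum : ∑ j, w' j = 1 := by
    have e1 : ∑ j, w' j = ∑ i : {x // x ∈ s}, w i :=
      Fintype.sum_equiv φ.toEquiv _ _ (fun j => rfl)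
    have e2 : ∑ i : {x // x ∈ s}, w (i : Fin n) = ∑ i ∈ s, w i := Finset.sum_coe_sort s w
    have e3 : ∑ i ∈ s, w i = ∑ i, w i := by
      rw [hs]
      exact Finset.sum_filter_of_ne (fun x _ hx => lt_of_le_of_ne (h0 x) (Ne.symm hx))
    rw [e1, e2, e3, h1]
  obtain ⟨M, e, hS, hW⟩ := hR m w' hw'pos hw'sum
  refine ⟨M, fun i => if h : i ∈ s then {e (φ.symm ⟨i, h⟩)} else ∅, ?_, ?_, ?_⟩
  · intro i
    by_cases h : i ∈ s
    · simp only [dif_pos h]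
      intro x hx
      simp only [Finset.mem_singleton] at hx
      subst hx
      rw [hS]
      exact Finset.mem_map_of_mem e (Finset.mem_univ _)
    · simp [dif_neg h]
  · intro i j hij
    by_cases hi : i ∈ s
    · by_cases hj : j ∈ s
      · simp only [dif_pos hi, dif_pos hj, Finset.disjoint_singleton]
        intro hc
        exact hij (Subtype.ext_iff.mp (φ.symm.injective (e.injective hc)))
      · simp only [dif_neg hj]
        exact Finset.disjoint_empty_right _
    · simp only [dif_neg hi]
      exact Finset.disjoint_empty_left _
  · intro T
    induction T using Finset.induction_on with
    | empty => simp [M.emptyW]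
    | @insert a T ha ih =>
      rw [Finset.biUnion_insert, Finset.sum_insert ha]
      have hsub : ∀ i, (if h : i ∈ s then ({e (φ.symm ⟨i, h⟩)} : Finset ℕ) else ∅) ⊆ M.S := by
        intro i
        by_cases h : i ∈ s
        · simp only [dif_pos h]
          intro x hx
          simp only [Finset.mem_singleton] at hx
          subst hx
          rw [hS]
          exact Finset.mem_map_of_mem e (Finset.mem_univ _)
        · simp [dif_neg h]
      have hdisj : Disjoint (if h : a ∈ s then ({e (φ.symm ⟨a, h⟩)} : Finset ℕ) else ∅)
          (T.biUnion fun i => if h : i ∈ s then ({e (φ.symm ⟨i, h⟩)} : Finset ℕ) else ∅) := by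
        rw [Finset.disjoint_biUnion_right]
        intro i hi
        by_cases hia : a ∈ s
        · by_cases his : i ∈ s
          · simp only [dif_pos hia, dif_pos his, Finset.disjoint_singleton]
            intro hc
            have : a = i := Subtype.ext_iff.mp (φ.symm.injective (e.injective hc))
            exact absurd (this ▸ hi) ha
          · simp only [dif_neg his]
            exact Finset.disjoint_empty_right _
        · simp only [dif_neg hia]
          exact Finset.disjoint_empty_left _
      rw [M.addW _ _ (hsub a) (Finset.biUnion_subset.mpr fun i _ => hsub i) hdisj, ih]
      congr 1
      by_cases h : a ∈ s
      · simp only [dif_pos h]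
        have := hW (φ.symm ⟨a, h⟩)
        rw [this]
        show w (φ (φ.symm ⟨a, h⟩)) = w a
        rw [OrderIso.apply_symm_apply]
      · simp only [dif_neg h, M.emptyW]
        rw [hs, Finset.mem_filter] at h
        push_neg at h
        have := h (Finset.mem_univ a)
        linarith [h0 a]

lemma null_biUnion (R : LOrder) (hT : TransAx R) (hD : DominanceAx R) (hE : EquivalenceAx R)
    {n : ℕ} {M : Measurement} {A : Fin n → Finset ℕ}
    (hAS : ∀ i, A i ⊆ M.S) (hdisj : ∀ i j, i ≠ j → Disjoint (A i) (A j))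
    (T : Finset (Fin n)) (hnull : ∀ i ∈ T, IsNull R (A i) M) :
    IsNull R (T.biUnion A) M := by
  classical
  induction T using Finset.induction_on with
  | empty => simpa using null_empty R hE M
  | @insert a T ha ih =>
    rw [Finset.biUnion_insert]
    have hd : Disjoint (A a) (T.biUnion A) := by
      rw [Finset.disjoint_biUnion_right]
      intro i hi
      exact hdisj a i (fun hh => ha (hh ▸ hi))
    exact null_union R hT hD (hAS a) (Finset.biUnion_subset.mpr fun i _ => hAS i) hd
      (hnull a (Finset.mem_insert_self a T))
      (ih fun i hi => hnull i (Finset.mem_insert_of_mem hi))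

/-- Lemma 3: at-least-as-likely implies greater-or-equal weight. -/
theorem stmt2 (R : LOrder) (hT : TransAx R) (hD : DominanceAx R)
    (hS : SeparationAx R) (hE : EquivalenceAx R) (hR : Rich)
    (M N : Measurement) (E F : Finset ℕ) (hEM : E ⊆ M.S) (hFN : F ⊆ N.S)
    (h : R (E, M) (F, N)) : M.W E ≥ N.W F := by
  classical
  by_contra hcon
  push_neg at hcon
  set a := M.W E with ha
  set b := N.W F with hb
  have ha0 : 0 ≤ a := M.nonneg E
  have hb1 : b ≤ 1 := weight_le_one N hFN
  set δ := b - a with hδ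
  have hδpos : 0 < δ := by simp [hδ]; linarith
  have hδ1 : δ ≤ 1 := by linarith
  -- Step 1: produce a null event of weight δ.
  obtain ⟨P, A, hAS, hAdisj, hAW⟩ := mkMeas hR 3 ![a, δ, 1 - b]
    (by intro i; fin_cases i <;> simp <;> linarith)
    (by
      simp only [Fin.sum_univ_three, Matrix.cons_val_zero, Matrix.cons_val_one,
        Matrix.head_cons, Matrix.cons_val_two, Matrix.tail_cons, hδ]
      ring)
  set G : Finset ℕ := ({0} : Finset (Fin 3)).biUnion A with hG
  set H : Finset ℕ := ({0, 1} : Finset (Fin 3)).biUnion A with hH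
  have hGH : G ⊆ H := Finset.biUnion_subset_biUnion_of_subset_left A (by decide)
  have hHS : H ⊆ P.S := Finset.biUnion_subset.mpr fun i _ => hAS i
  have hGS : G ⊆ P.S := hGH.trans hHS
  have hWG : P.W G = a := by
    rw [hG, hAW]; simp
  have hWH : P.W H = b := by
    rw [hH, hAW]
    rw [Finset.sum_insert (by decide), Finset.sum_singleton]
    show a + δ = b
    rw [hδ]; ring
  have hEG : lequiv R (E, M) (G, P) := hE M P E G hEM hGS (by rw [hWG])
  have hFH : lequiv R (F, N) (H, P) := hE N P F H hFN hHS (by rw [hWH])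
  have hGHrel : R (G, P) (H, P) := hT _ _ _ (hT _ _ _ hEG.2 h) hFH.1
  have hdom := hD P G H hGH hHS
  have hnullD : IsNull R (H \ G) P := (hdom.2).mp ⟨hdom.1, hGHrel⟩
  have hDsub : H \ G ⊆ P.S := (Finset.sdiff_subset).trans hHS
  have hWD : P.W (H \ G) = δ := by
    have hadd : P.W (G ∪ (H \ G)) = P.W G + P.W (H \ G) :=
      P.addW G (H \ G) hGS hDsub Finset.disjoint_sdiff
    rw [Finset.union_sdiff_of_subset hGH, hWH, hWG] at hadd
    rw [hδ]; linarith
  -- Step 2: every event of weight ≤ δ is null.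
  have L1 : ∀ (M' : Measurement) (E' : Finset ℕ), E' ⊆ M'.S → M'.W E' ≤ δ →
      IsNull R E' M' := by
    intro M' E' hE'S hE'w
    set t := M'.W E' with ht
    have ht0 : 0 ≤ t := M'.nonneg E'
    obtain ⟨Q, B, hBS, hBdisj, hBW⟩ := mkMeas hR 3 ![t, δ - t, 1 - δ]
      (by intro i; fin_cases i <;> simp <;> linarith)
      (by
      simp only [Fin.sum_univ_three, Matrix.cons_val_zero, Matrix.cons_val_one,
        Matrix.head_cons, Matrix.cons_val_two, Matrix.tail_cons, hδ]
      ring)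
    set D' : Finset ℕ := ({0, 1} : Finset (Fin 3)).biUnion B with hD'
    have hD'S : D' ⊆ Q.S := Finset.biUnion_subset.mpr fun i _ => hBS i
    have hWD' : Q.W D' = δ := by
      rw [hD', hBW, Finset.sum_insert (by decide), Finset.sum_singleton]
      show t + (δ - t) = δ
      ring
    have hnullD' : IsNull R D' Q :=
      null_transfer R hT hE hDsub hD'S (by rw [hWD, hWD']) hnullD
    have hB0sub : B 0 ⊆ D' := by
      rw [hD']
      exact Finset.subset_biUnion_of_mem B (by decide)
    have hnullB0 : IsNull R (B 0) Q := null_subset R hT hD hB0sub hD'S hnullD'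
    have hWB0 : Q.W (B 0) = t := by
      have := hBW {0}
      rw [Finset.singleton_biUnion, Finset.sum_singleton] at this
      rw [this]; rfl
    exact null_transfer R hT hE (hBS 0) hE'S (by rw [hWB0]) hnullB0
  -- Step 3: contradiction with separation.
  obtain ⟨E₀, M₀, hE₀S, hE₀not⟩ := hS
  set w₀ := M₀.W E₀ with hw₀
  have hw₀0 : 0 ≤ w₀ := M₀.nonneg E₀
  have hw₀1 : w₀ ≤ 1 := weight_le_one M₀ hE₀S
  by_cases hcase : w₀ ≤ δ
  · exact hE₀not (L1 M₀ E₀ hE₀S hcase)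
  push_neg at hcase
  set k : ℕ := ⌈1 / δ⌉₊ with hk
  have hk1 : 1 ≤ k := Nat.one_le_ceil_iff.mpr (by positivity)
  have hkpos : (0 : ℝ) < k := by exact_mod_cast hk1
  have hkδ : 1 / (k : ℝ) ≤ δ := by
    rw [div_le_iff₀ hkpos]
    have h1 : 1 / δ ≤ (k : ℝ) := Nat.le_ceil _
    calc (1 : ℝ) = δ * (1 / δ) := by field_simp
    _ ≤ δ * k := by
        apply mul_le_mul_of_nonneg_left h1 (le_of_lt hδpos)
    _ = δ * k := rfl
  have hwk : w₀ / (k : ℝ) ≤ δ := by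
    have h2 : w₀ / (k : ℝ) ≤ 1 / (k : ℝ) := by gcongr
    exact h2.trans hkδ
  set wq : Fin (k + 1) → ℝ := fun i => if (i : ℕ) < k then w₀ / k else 1 - w₀ with hwq
  have hwqsum : ∑ i, wq i = 1 := by
    rw [Fin.sum_univ_castSucc]
    have h1 : ∀ i : Fin k, wq i.castSucc = w₀ / k := by
      intro i
      simp [hwq, Fin.is_lt i]
    have h2 : wq (Fin.last k) = 1 - w₀ := by
      simp [hwq]
    rw [h2, Finset.sum_congr rfl fun i _ => h1 i, Finset.sum_const, Finset.card_univ,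
      Fintype.card_fin, nsmul_eq_mul]
    field_simp
    ring
  obtain ⟨Q, B, hBS, hBdisj, hBW⟩ := mkMeas hR (k + 1) wq
    (by
      intro i
      by_cases hi : (i : ℕ) < k
      · simp only [hwq, if_pos hi]; positivity
      · simp only [hwq, if_neg hi]; linarith)
    hwqsum
  set T : Finset (Fin (k + 1)) := Finset.univ.erase (Fin.last k) with hTdef
  have hTw : ∀ i ∈ T, wq i = w₀ / k := by
    intro i hi
    have : i ≠ Fin.last k := Finset.ne_of_mem_erase hi
    simp [hwq, Fin.val_lt_last this]
  have hTnull : ∀ i ∈ T, IsNull R (B i) Q := by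
    intro i hi
    apply L1 Q (B i) (hBS i)
    have := hBW {i}
    rw [Finset.singleton_biUnion, Finset.sum_singleton] at this
    rw [this, hTw i hi]
    exact hwk
  have hBnull : IsNull R (T.biUnion B) Q := null_biUnion R hT hD hE hBS hBdisj T hTnull
  have hBweight : Q.W (T.biUnion B) = w₀ := by
    rw [hBW, Finset.sum_congr rfl hTw, Finset.sum_const]
    rw [hTdef, Finset.card_erase_of_mem (Finset.mem_univ _), Finset.card_univ,
      Fintype.card_fin]
    simp only [Nat.add_sub_cancel, nsmul_eq_mul]
    field_simp
  exact hE₀not (null_transfer R hT hE (Finset.biUnion_subset.mpr fun i _ => hBS i)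
    hE₀S (by rw [hBweight]) hBnull)
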